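/- Let Γ : U → V^d be k-majority-unique (every nonempty S with |S| ≤ k contains x having more than d/2 unique position-sensitive neighbors). Let T ⊆ U × U be nonempty with |T| ≤ k. For a ∈ U let T_{1,a} = {(x₁,x₂) ∈ T : x₁ = a} and π₁(T) = {x₁ : (x₁,x₂) ∈ T}. Then there exists a ∈ π₁(T) such that for every (x₁,x₂) ∈ T_{1,a}, the pair (x₁,x₂) has more than d/2 unique neighbors with respect to T \ T_{1,a} under the map Υ(x₁,x₂)_i = (Γ(x₁)_i, Γ(x₂)_i). -/

import Mathlib

open Finset

/-- Position-sensitive neighborhood: `nbr Γ S = {(i, Γ x i) : x ∈ S, i}`. -/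
def nbr {U V ι : Type*} [DecidableEq V] [DecidableEq ι] [Fintype ι]
    (Γ : U → ι → V) (S : Finset U) : Finset (ι × V) :=
  (S ×ˢ (Finset.univ : Finset ι)).image (fun p => (p.2, Γ p.1 p.2))

/-- First-component selection step in Lemma 3: there is `a ∈ π₁(T)` such that all
pairs with first component `a` have more than `d/2` unique neighbors w.r.t.
`T \ T_{1,a}` under `Υ(x₁,x₂)ᵢ = (Γ(x₁)ᵢ, Γ(x₂)ᵢ)`. -/
theorem stmt8 {U V : Type*} [DecidableEq U] [DecidableEq V] {d k : ℕ} (hd : 0 < d)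
    (Γ : U → Fin d → V)
    (hmaj : ∀ S : Finset U, S.Nonempty → S.card ≤ k →
      ∃ x ∈ S, (d : ℝ) / 2 < (((nbr Γ {x}) \ (nbr Γ (S.erase x))).card : ℝ))
    (T : Finset (U × U)) (hTne : T.Nonempty) (hTk : T.card ≤ k) :
    ∃ a ∈ T.image Prod.fst,
      ∀ p ∈ T.filter (fun q => q.1 = a),
        (d : ℝ) / 2 <
          (((nbr (fun (q : U × U) (i : Fin d) => (Γ q.1 i, Γ q.2 i)) {p}) \
            (nbr (fun (q : U × U) (i : Fin d) => (Γ q.1 i, Γ q.2 i))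
              (T \ T.filter (fun q => q.1 = a)))).card : ℝ) := by
  obtain ⟨a, haS, hcard⟩ := hmaj (T.image Prod.fst) (hTne.image _)
    (le_trans Finset.card_image_le hTk)
  refine ⟨a, haS, fun p hp => ?_⟩
  rw [Finset.mem_filter] at hp
  obtain ⟨hpT, hpa⟩ := hp
  refine lt_of_lt_of_le hcard ?_
  norm_cast
  apply Finset.card_le_card_of_injOn (fun q => (q.1, (q.2, Γ p.2 q.1)))
  · rintro ⟨j, v⟩ hq
    simp only [nbr, Finset.mem_coe, Finset.mem_sdiff, Finset.mem_image, Finset.mem_product,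
      Finset.mem_singleton, Finset.mem_univ, and_true, Prod.exists] at hq ⊢
    obtain ⟨⟨x, i, hx, hxe⟩, hnot⟩ := hq
    obtain ⟨rfl, rfl⟩ := Prod.mk.injEq .. ▸ hxe
    subst hx
    constructor
    · exact ⟨p.1, p.2, i, by simp, by simp [hpa]⟩
    · rintro ⟨y, z, j, hyz, heq⟩
      obtain ⟨hyzT, hyzf⟩ := hyz
      simp only [Prod.mk.injEq] at heq
      obtain ⟨rfl, h1, h2⟩ := heq
      refine hnot ⟨y, j, Finset.mem_erase.mpr ⟨fun h => hyzf ?_,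
        Finset.mem_image.mpr ⟨(y, z), hyzT, rfl⟩⟩, by rw [h1]⟩
      exact Finset.mem_filter.mpr ⟨hyzT, h⟩
  · rintro ⟨j, v⟩ hj ⟨j', v'⟩ hj' h
    simp only [nbr, Finset.mem_coe, Finset.mem_sdiff, Finset.mem_image] at hj hj'
    simp only [Prod.mk.injEq] at h
    obtain ⟨⟨x, hx, hxe⟩, -⟩ := hj
    obtain ⟨⟨x', hx', hxe'⟩, -⟩ := hj'
    obtain ⟨rfl, hv, -⟩ := h
    simp only [Finset.mem_product, Finset.mem_singleton] at hx hx'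
    obtain ⟨rfl, rfl⟩ := Prod.mk.injEq .. ▸ hxe
    obtain ⟨h1, h2⟩ := Prod.mk.injEq .. ▸ hxe'
    simp_all
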